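/- For F ∈ 𝓗₊ ∪ 𝓗₋, a ≥ 0 and b > 0, define Γ_F^{(a,b)} := ∫₀^∞ t^a (T_F(t))^b dt ∈ [0,∞]. Then Γ_F^{(a,b)} = 0 if and only if F ∈ {max, min}. -/

import Mathlib

open MeasureTheory Filter Set Real
open scoped Classical

/-- The class 𝓗₊. -/
def HPlus (F : ℝ → ℝ → ℝ) : Prop :=
  ContinuousOn (fun p : ℝ × ℝ => F p.1 p.2) {p | 0 < p.1 ∧ 0 < p.2} ∧
  (∀ x y, 0 < x → 0 < y → 0 < F x y) ∧
  (∀ x x' y y', 0 < x → 0 < y → x ≤ x' → y ≤ y' → F x y ≤ F x' y') ∧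
  (∀ a x y, 0 < a → 0 < x → 0 < y → F (a * x) (a * y) = a * F x y) ∧
  (∀ x y, 0 < x → 0 < y → max x y ≤ F x y) ∧
  (∀ y, 0 < y →
    Tendsto (fun x => F x y) (nhdsWithin 0 (Set.Ioi 0)) (nhds y) ∧
    Tendsto (fun x => F y x) (nhdsWithin 0 (Set.Ioi 0)) (nhds y))

/-- The class 𝓗₋. -/
def HMinus (F : ℝ → ℝ → ℝ) : Prop :=
  ContinuousOn (fun p : ℝ × ℝ => F p.1 p.2) {p | 0 < p.1 ∧ 0 < p.2} ∧
  (∀ x y, 0 < x → 0 < y → 0 < F x y) ∧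
  (∀ x x' y y', 0 < x → 0 < y → x ≤ x' → y ≤ y' → F x y ≤ F x' y') ∧
  (∀ a x y, 0 < a → 0 < x → 0 < y → F (a * x) (a * y) = a * F x y) ∧
  (∀ x y, 0 < x → 0 < y → F x y ≤ min x y) ∧
  (∀ y, 0 < y →
    Tendsto (fun x => F x y) atTop (nhds y) ∧
    Tendsto (fun x => F y x) atTop (nhds y))

/-- The associated element F* of 𝓗₊. -/
noncomputable def Fstar (F : ℝ → ℝ → ℝ) : ℝ → ℝ → ℝ :=
  if HPlus F then F else fun x y => (F x⁻¹ y⁻¹)⁻¹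

/-- T_F(t) := sup { z : F*(e^{-t}, e^{-z}) ≥ 1 }. -/
noncomputable def TF (F : ℝ → ℝ → ℝ) (t : ℝ) : ℝ :=
  sSup {z : ℝ | 1 ≤ Fstar F (Real.exp (-t)) (Real.exp (-z))}

/-- T_F^-(t) := inf { z : F*(e^{-t}, e^{-z}) ≤ 1 }. -/
noncomputable def TFminus (F : ℝ → ℝ → ℝ) (t : ℝ) : ℝ :=
  sInf {z : ℝ | Fstar F (Real.exp (-t)) (Real.exp (-z)) ≤ 1}

/-- r_F := log F*(1,1). -/
noncomputable def rF (F : ℝ → ℝ → ℝ) : ℝ := Real.log (Fstar F 1 1)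

/-- Γ_F^{(a,b)} := ∫₀^∞ t^a (T_F(t))^b dt, as an extended nonnegative real. -/
noncomputable def Gamma (F : ℝ → ℝ → ℝ) (a b : ℝ) : ENNReal :=
  ∫⁻ t in Set.Ioi (0 : ℝ), ENNReal.ofReal (t ^ a * (TF F t) ^ b)

/-- F^#(x,y) := F(y,x). -/
def Fsharp (F : ℝ → ℝ → ℝ) : ℝ → ℝ → ℝ := fun x y => F y x

section Aux

variable {F : ℝ → ℝ → ℝ}

lemma aux_not_both (h1 : HPlus F) (h2 : HMinus F) : False := by
  have a := h1.2.2.2.2.1 1 2 one_pos two_pos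
  have b := h2.2.2.2.2.1 1 2 one_pos two_pos
  have : (2:ℝ) ≤ 1 := le_trans (le_trans (le_max_right 1 2) a)
    (le_trans b (min_le_left 1 2))
  linarith

lemma aux_fstar_hplus (h : HPlus F) : Fstar F = F := if_pos h

lemma aux_fstar_hminus (h : HMinus F) :
    Fstar F = fun x y => (F x⁻¹ y⁻¹)⁻¹ :=
  if_neg (fun h' => aux_not_both h' h)

lemma aux_inv_le (u c : ℝ) (hu : 0 < u) (hc : 0 < c) (h : c ≤ u⁻¹) : u ≤ c⁻¹ := by
  rw [← inv_inv u]
  exact inv_anti₀ hc h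

lemma aux_fstar_max_le (hF : HPlus F ∨ HMinus F) :
    ∀ x y, 0 < x → 0 < y → max x y ≤ Fstar F x y := by
  rcases hF with h | h
  · rw [aux_fstar_hplus h]; exact h.2.2.2.2.1
  · rw [aux_fstar_hminus h]
    intro x y hx hy
    have hx' : 0 < x⁻¹ := inv_pos.2 hx
    have hy' : 0 < y⁻¹ := inv_pos.2 hy
    have hmin := h.2.2.2.2.1 x⁻¹ y⁻¹ hx' hy'
    have hpos := h.2.1 x⁻¹ y⁻¹ hx' hy'
    refine max_le ?_ ?_
    · exact aux_inv_le _ _ hx hpos (le_trans hmin (min_le_left _ _))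
    · exact aux_inv_le _ _ hy hpos (le_trans hmin (min_le_right _ _))

lemma aux_fstar_hom (hF : HPlus F ∨ HMinus F) :
    ∀ c x y, 0 < c → 0 < x → 0 < y → Fstar F (c * x) (c * y) = c * Fstar F x y := by
  rcases hF with h | h
  · rw [aux_fstar_hplus h]; exact h.2.2.2.1
  · rw [aux_fstar_hminus h]
    intro c x y hc hx hy
    have hc' : 0 < c⁻¹ := inv_pos.2 hc
    have hx' : 0 < x⁻¹ := inv_pos.2 hx
    have hy' : 0 < y⁻¹ := inv_pos.2 hy
    simp only [mul_inv]
    rw [h.2.2.2.1 c⁻¹ x⁻¹ y⁻¹ hc' hx' hy', mul_inv, inv_inv]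

lemma aux_fstar_mono1 (hF : HPlus F ∨ HMinus F) :
    ∀ x x' y, 0 < x → 0 < y → x ≤ x' → Fstar F x y ≤ Fstar F x' y := by
  rcases hF with h | h
  · rw [aux_fstar_hplus h]
    intro x x' y hx hy hxx'
    exact h.2.2.1 x x' y y hx hy hxx' le_rfl
  · rw [aux_fstar_hminus h]
    intro x x' y hx hy hxx'
    have hx' : 0 < x' := lt_of_lt_of_le hx hxx'
    have h1 : x'⁻¹ ≤ x⁻¹ := inv_anti₀ hx hxx'
    have h2 : F x'⁻¹ y⁻¹ ≤ F x⁻¹ y⁻¹ :=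
      h.2.2.1 x'⁻¹ x⁻¹ y⁻¹ y⁻¹ (inv_pos.2 hx') (inv_pos.2 hy) h1 le_rfl
    exact inv_anti₀ (h.2.1 x'⁻¹ y⁻¹ (inv_pos.2 hx') (inv_pos.2 hy)) h2

/-- The set whose sup defines `TF`. -/
def SF (F : ℝ → ℝ → ℝ) (t : ℝ) : Set ℝ :=
  {z : ℝ | 1 ≤ Fstar F (Real.exp (-t)) (Real.exp (-z))}

lemma aux_TF_eq (t : ℝ) : TF F t = sSup (SF F t) := rfl

lemma aux_zero_mem (hF : HPlus F ∨ HMinus F) (t : ℝ) : (0:ℝ) ∈ SF F t := by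
  have h := aux_fstar_max_le hF (Real.exp (-t)) (Real.exp (-(0:ℝ)))
    (Real.exp_pos _) (Real.exp_pos _)
  simp only [SF, Set.mem_setOf_eq]
  refine le_trans ?_ h
  rw [neg_zero, Real.exp_zero]
  exact le_max_right _ _

lemma aux_bddAbove (hF : HPlus F ∨ HMinus F) {t : ℝ} (ht : 0 < t) :
    BddAbove (SF F t) := by
  rcases hF with h | h
  · -- 𝓗₊ case
    have hy1 : Real.exp (-t) < 1 := Real.exp_lt_one_iff.2 (by linarith)
    have hlim : Tendsto (fun x => F (Real.exp (-t)) x)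
        (nhdsWithin 0 (Set.Ioi 0)) (nhds (Real.exp (-t))) :=
      (h.2.2.2.2.2 (Real.exp (-t)) (Real.exp_pos _)).2
    have hev : ∀ᶠ x in nhdsWithin (0:ℝ) (Set.Ioi 0), F (Real.exp (-t)) x < 1 :=
      hlim.eventually_lt_const hy1
    have htend : Tendsto (fun z : ℝ => Real.exp (-z)) atTop
        (nhdsWithin 0 (Set.Ioi 0)) := by
      refine tendsto_nhdsWithin_iff.2 ⟨?_, Eventually.of_forall fun z => Real.exp_pos _⟩
      exact Real.tendsto_exp_atBot.comp tendsto_neg_atTop_atBot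
    have hev2 : ∀ᶠ z in atTop, F (Real.exp (-t)) (Real.exp (-z)) < 1 :=
      htend.eventually hev
    obtain ⟨Z, hZ⟩ := eventually_atTop.1 hev2
    refine ⟨Z, fun z hz => ?_⟩
    by_contra hzZ
    push_neg at hzZ
    have h1 := hZ z hzZ.le
    have hz' : 1 ≤ F (Real.exp (-t)) (Real.exp (-z)) := by
      have h2 := hz; rwa [SF, Set.mem_setOf_eq, aux_fstar_hplus h] at h2
    linarith
  · -- 𝓗₋ case
    have key : ∀ z : ℝ, z ∈ SF F t → F (Real.exp t) (Real.exp z) ≤ 1 := by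
      intro z hz
      rw [SF, Set.mem_setOf_eq, aux_fstar_hminus h] at hz
      simp only [Real.exp_neg, inv_inv] at hz
      exact (one_le_inv_iff₀.1 hz).2
    have hlim : Tendsto (fun x => F (Real.exp t) x) atTop (nhds (Real.exp t)) :=
      (h.2.2.2.2.2 (Real.exp t) (Real.exp_pos _)).2
    have hev : ∀ᶠ x in atTop, 1 < F (Real.exp t) x :=
      hlim.eventually_const_lt (Real.one_lt_exp_iff.2 ht)
    have hev2 : ∀ᶠ z : ℝ in atTop, 1 < F (Real.exp t) (Real.exp z) :=
      Real.tendsto_exp_atTop.eventually hev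
    obtain ⟨Z, hZ⟩ := eventually_atTop.1 hev2
    refine ⟨Z, fun z hz => ?_⟩
    by_contra hzZ
    push_neg at hzZ
    exact absurd (key z hz) (not_le.2 (hZ z hzZ.le))

lemma aux_tf_nonneg (hF : HPlus F ∨ HMinus F) {t : ℝ} (ht : 0 < t) : 0 ≤ TF F t :=
  le_csSup (aux_bddAbove hF ht) (aux_zero_mem hF t)

lemma aux_tf_mono (hF : HPlus F ∨ HMinus F) {t t₀ : ℝ} (ht : 0 < t) (htt : t ≤ t₀) :
    TF F t₀ ≤ TF F t := by
  rw [aux_TF_eq, aux_TF_eq]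
  refine csSup_le_csSup (aux_bddAbove hF ht) ⟨0, aux_zero_mem hF t₀⟩ ?_
  intro z hz
  rw [SF, Set.mem_setOf_eq] at hz ⊢
  refine le_trans hz (aux_fstar_mono1 hF _ _ _ (Real.exp_pos _) (Real.exp_pos _) ?_)
  exact Real.exp_le_exp.2 (neg_le_neg htt)

lemma aux_tf_zero_of_max (hmax : ∀ x y, 0 < x → 0 < y → Fstar F x y = max x y)
    {t : ℝ} (ht : 0 < t) : TF F t = 0 := by
  have hS : SF F t = Set.Iic 0 := by
    ext z
    rw [SF, Set.mem_setOf_eq, hmax _ _ (Real.exp_pos _) (Real.exp_pos _), Set.mem_Iic]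
    constructor
    · intro hz
      rcases le_max_iff.1 hz with h1 | h1
      · exact absurd h1 (not_le.2 (Real.exp_lt_one_iff.2 (by linarith)))
      · rw [show (1:ℝ) = Real.exp 0 from (Real.exp_zero).symm, Real.exp_le_exp] at h1
        linarith
    · intro hz
      refine le_max_of_le_right ?_
      rw [show (1:ℝ) = Real.exp 0 from (Real.exp_zero).symm, Real.exp_le_exp]
      linarith
  rw [aux_TF_eq, hS, csSup_Iic]

lemma aux_max_of_tf_zero (hF : HPlus F ∨ HMinus F) (h : ∀ t, 0 < t → TF F t = 0) :
    ∀ x y, 0 < x → 0 < y → Fstar F x y = max x y := by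
  intro x y hx hy
  by_contra hne
  have hlt : max x y < Fstar F x y :=
    lt_of_le_of_ne (aux_fstar_max_le hF x y hx hy) (fun e => hne e.symm)
  have hmpos : 0 < Fstar F x y := lt_of_lt_of_le (lt_max_of_lt_left hx) hlt.le
  have hxm : x < Fstar F x y := lt_of_le_of_lt (le_max_left x y) hlt
  have hym : y < Fstar F x y := lt_of_le_of_lt (le_max_right x y) hlt
  set m := Fstar F x y with hm
  set t := Real.log (m / x) with htdef
  set z := Real.log (m / y) with hzdef
  have ht : 0 < t := Real.log_pos ((one_lt_div hx).2 hxm)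
  have hz : 0 < z := Real.log_pos ((one_lt_div hy).2 hym)
  have hext : Real.exp (-t) = m⁻¹ * x := by
    rw [htdef, Real.exp_neg, Real.exp_log (div_pos hmpos hx), inv_div, div_eq_inv_mul]
  have hexz : Real.exp (-z) = m⁻¹ * y := by
    rw [hzdef, Real.exp_neg, Real.exp_log (div_pos hmpos hy), inv_div, div_eq_inv_mul]
  have hmem : z ∈ SF F t := by
    rw [SF, Set.mem_setOf_eq, hext, hexz,
      aux_fstar_hom hF m⁻¹ x y (inv_pos.2 hmpos) hx hy, ← hm,
      inv_mul_cancel₀ hmpos.ne']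
  have hle : z ≤ TF F t := le_csSup (aux_bddAbove hF ht) hmem
  rw [h t ht] at hle
  linarith

end Aux

/-- Γ_F^{(a,b)} = 0 iff F ∈ {max, min} (as functions on (0,∞)²). -/
theorem stmt7 (F : ℝ → ℝ → ℝ) (hF : HPlus F ∨ HMinus F) (a b : ℝ)
    (ha : 0 ≤ a) (hb : 0 < b) :
    Gamma F a b = 0 ↔
      ((∀ x y : ℝ, 0 < x → 0 < y → F x y = max x y) ∨
       (∀ x y : ℝ, 0 < x → 0 < y → F x y = min x y)) := by
  have key1 : Gamma F a b = 0 ↔ ∀ t, 0 < t → TF F t = 0 := by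
    constructor
    · intro h t ht
      by_contra htne
      have htpos : 0 < TF F t := lt_of_le_of_ne (aux_tf_nonneg hF ht) (Ne.symm htne)
      have hcpos : 0 < (t/2) ^ a * TF F t ^ b :=
        mul_pos (Real.rpow_pos_of_pos (half_pos ht) a) (Real.rpow_pos_of_pos htpos b)
      have hsub : ∀ s ∈ Set.Ioc (t/2) t,
          (t/2) ^ a * TF F t ^ b ≤ s ^ a * TF F s ^ b := by
        intro s hs
        have hs0 : 0 < s := lt_trans (half_pos ht) hs.1
        have h1 : (t/2 : ℝ) ^ a ≤ s ^ a :=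
          Real.rpow_le_rpow (half_pos ht).le hs.1.le ha
        have h2 : TF F t ≤ TF F s := aux_tf_mono hF hs0 hs.2
        have h3 : TF F t ^ b ≤ TF F s ^ b := Real.rpow_le_rpow htpos.le h2 hb.le
        exact mul_le_mul h1 h3 (Real.rpow_nonneg htpos.le b) (Real.rpow_nonneg hs0.le a)
      have hle1 : ∫⁻ s in Set.Ioc (t/2) t, ENNReal.ofReal (s ^ a * TF F s ^ b) ≤
          Gamma F a b :=
        lintegral_mono_set (fun s hs => lt_trans (half_pos ht) hs.1)
      have hle2 : ENNReal.ofReal ((t/2) ^ a * TF F t ^ b) * volume (Set.Ioc (t/2) t) ≤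
          ∫⁻ s in Set.Ioc (t/2) t, ENNReal.ofReal (s ^ a * TF F s ^ b) := by
        rw [← setLIntegral_const]
        exact lintegral_mono_ae (ae_restrict_of_forall_mem measurableSet_Ioc
          fun s hs => ENNReal.ofReal_le_ofReal (hsub s hs))
      have hfin := le_trans hle2 hle1
      rw [h, le_zero_iff, mul_eq_zero] at hfin
      rcases hfin with h' | h'
      · rw [ENNReal.ofReal_eq_zero] at h'; linarith
      · rw [Real.volume_Ioc, ENNReal.ofReal_eq_zero] at h'; linarith
    · intro h
      have heq : Gamma F a b = ∫⁻ _ in Set.Ioi (0:ℝ), (0 : ENNReal) :=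
        setLIntegral_congr_fun measurableSet_Ioi (fun t ht => by
          rw [h t ht, Real.zero_rpow hb.ne', mul_zero, ENNReal.ofReal_zero])
      rw [heq, lintegral_zero]
  have key2 : (∀ t, 0 < t → TF F t = 0) ↔
      (∀ x y, 0 < x → 0 < y → Fstar F x y = max x y) :=
    ⟨aux_max_of_tf_zero hF, fun hm t ht => aux_tf_zero_of_max hm ht⟩
  rw [key1, key2]
  rcases hF with h | h
  · simp only [aux_fstar_hplus h]
    constructor
    · exact fun hm => Or.inl hm
    · rintro (hm | hm)
      · exact hm
      · exfalso
        have h1 := hm 1 2 one_pos two_pos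
        have h2 := h.2.2.2.2.1 1 2 one_pos two_pos
        rw [h1] at h2
        norm_num at h2
  · simp only [aux_fstar_hminus h]
    constructor
    · intro hm
      refine Or.inr fun u v hu hv => ?_
      have h1 := hm u⁻¹ v⁻¹ (inv_pos.2 hu) (inv_pos.2 hv)
      simp only [inv_inv] at h1
      rw [← inv_inv (F u v), h1]
      rcases le_total u v with huv | huv
      · rw [min_eq_left huv, max_eq_left (inv_anti₀ hu huv), inv_inv]
      · rw [min_eq_right huv, max_eq_right (inv_anti₀ hv huv), inv_inv]
    · rintro (hm | hm)
      · exfalso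
        have h1 := hm 1 2 one_pos two_pos
        have h2 := h.2.2.2.2.1 1 2 one_pos two_pos
        rw [h1] at h2
        norm_num at h2
      · intro x y hx hy
        rw [hm x⁻¹ y⁻¹ (inv_pos.2 hx) (inv_pos.2 hy)]
        rcases le_total x y with huv | huv
        · rw [max_eq_right huv, min_eq_right (inv_anti₀ hx huv), inv_inv]
        · rw [max_eq_left huv, min_eq_left (inv_anti₀ hy huv), inv_inv]
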